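/- arXiv:2503.15827 — 3 statements merged into one kernel-verified Lean document; each statement's English description precedes it below -/
import Mathlib

section
/- Let H be a Hermitian operator with simple ground eigenvalue λ₀, ground state projector σ = |ψ₀⟩⟨ψ₀|, and spectral gap Δ > 0. Then for any density matrix ρ, the trace distance satisfies D(ρ,σ) = (1/2)‖ρ - σ‖₁ ≤ sqrt((Tr[Hρ] - λ₀)/Δ). -/
open Matrix
open scoped ComplexOrder

/-- The trace norm `‖A‖₁ = Tr √(AᴴA)` of a complex matrix (its real part; the trace of a
positive semidefinite matrix is real). -/
noncomputable def traceNorm {n : ℕ} (A : Matrix (Fin n) (Fin n) ℂ) : ℝ :=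
  (((Matrix.posSemidef_conjTranspose_mul_self A).1.eigenvectorUnitary : Matrix (Fin n) (Fin n) ℂ) *
    diagonal ((fun x : ℝ => (x : ℂ)) ∘ (Real.sqrt ∘ (Matrix.posSemidef_conjTranspose_mul_self A).1.eigenvalues)) *
    (star (Matrix.posSemidef_conjTranspose_mul_self A).1.eigenvectorUnitary :
      Matrix (Fin n) (Fin n) ℂ)).trace.re

namespace TDAux

variable {n : ℕ}

lemma traceNorm_hermitian {A : Matrix (Fin n) (Fin n) ℂ} (hA : A.IsHermitian) :
    traceNorm A = ∑ i, |hA.eigenvalues i| := by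
  have hP := (Matrix.posSemidef_conjTranspose_mul_self A).1
  have h1 : traceNorm A = (cfc Real.sqrt (Aᴴ * A)).trace.re := by
    rw [hP.cfc_eq, Matrix.IsHermitian.cfc, Unitary.conjStarAlgAut_apply]; rfl
  have h2 : cfc Real.sqrt (Aᴴ * A) = cfc (fun x : ℝ => |x|) A := by
    rw [hA.eq, ← sq, ← cfc_comp_pow (R := ℝ) Real.sqrt 2 A (ha := hA.isSelfAdjoint)]
    congr 1
    funext x
    exact Real.sqrt_sq_eq_abs x
  rw [h1, h2, hA.cfc_eq, Matrix.IsHermitian.cfc, Unitary.conjStarAlgAut_apply,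
    Matrix.trace_mul_cycle, Unitary.coe_star_mul_self, Matrix.one_mul, Matrix.trace_diagonal]
  simp

lemma entry_eq_dot {ρ : Matrix (Fin n) (Fin n) ℂ} {U : Matrix (Fin n) (Fin n) ℂ}
    (B : Fin n → Fin n → ℂ) (hUB : ∀ k i, U k i = B i k) (i : Fin n) :
    (star U * (ρ * U)) i i = star (B i) ⬝ᵥ (ρ *ᵥ B i) := by
  simp only [Matrix.mul_apply, dotProduct, Matrix.mulVec, dotProduct, Pi.star_apply,
    Matrix.star_apply, hUB]

lemma trace_mul_eq_sum {M ρ : Matrix (Fin n) (Fin n) ℂ} (hM : M.IsHermitian) :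
    (M * ρ).trace = ∑ i, (hM.eigenvalues i : ℂ) *
      (star (⇑(hM.eigenvectorBasis i)) ⬝ᵥ (ρ *ᵥ ⇑(hM.eigenvectorBasis i))) := by
  conv_lhs => rw [hM.spectral_theorem, Unitary.conjStarAlgAut_apply]
  rw [Matrix.mul_assoc, Matrix.mul_assoc, Matrix.trace_mul_comm]
  simp only [Matrix.mul_assoc]
  rw [Matrix.trace]
  refine Finset.sum_congr rfl fun i _ => ?_
  simp only [Matrix.diag_apply, Matrix.mul_apply (M := diagonal _), Matrix.diagonal_apply,
    Function.comp_apply, ite_mul, zero_mul]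
  rw [Finset.sum_eq_single i (fun b _ hb => by simp [Ne.symm hb]) (by simp)]
  rw [if_pos rfl]
  exact congrArg _ (entry_eq_dot (fun i => ⇑(hM.eigenvectorBasis i)) (fun k i => rfl) i)

lemma trace_eq_sum_dot {M ρ : Matrix (Fin n) (Fin n) ℂ} (hM : M.IsHermitian) :
    ρ.trace = ∑ i, star (⇑(hM.eigenvectorBasis i)) ⬝ᵥ (ρ *ᵥ ⇑(hM.eigenvectorBasis i)) := by
  set U : Matrix (Fin n) (Fin n) ℂ := (hM.eigenvectorUnitary : Matrix (Fin n) (Fin n) ℂ) with hU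
  have hUU : U * star U = 1 := (Matrix.mem_unitaryGroup_iff).mp hM.eigenvectorUnitary.2
  have h1 : ρ.trace = (star U * (ρ * U)).trace := by
    calc ρ.trace = (ρ * (U * star U)).trace := by rw [hUU, Matrix.mul_one]
      _ = (ρ * U * star U).trace := by rw [Matrix.mul_assoc]
      _ = (star U * (ρ * U)).trace := by rw [Matrix.trace_mul_comm]
  rw [h1, Matrix.trace]
  exact Finset.sum_congr rfl fun i _ =>
    entry_eq_dot (fun i => ⇑(hM.eigenvectorBasis i)) (fun k i => rfl) i

lemma sqrt_cs {a b c d : ℝ} (ha : 0 ≤ a) (hb : 0 ≤ b) (hc : 0 ≤ c) (hd : 0 ≤ d) :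
    Real.sqrt a * Real.sqrt b + Real.sqrt c * Real.sqrt d
      ≤ Real.sqrt (a + c) * Real.sqrt (b + d) := by
  have h1 := Real.sq_sqrt ha
  have h2 := Real.sq_sqrt hb
  have h3 := Real.sq_sqrt hc
  have h4 := Real.sq_sqrt hd
  have h5 := Real.sqrt_nonneg a
  have h6 := Real.sqrt_nonneg b
  have h7 := Real.sqrt_nonneg c
  have h8 := Real.sqrt_nonneg d
  have key : Real.sqrt a * Real.sqrt b + Real.sqrt c * Real.sqrt d
      = Real.sqrt ((Real.sqrt a * Real.sqrt b + Real.sqrt c * Real.sqrt d) ^ 2) :=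
    (Real.sqrt_sq (by positivity)).symm
  rw [key]
  conv_rhs => rw [← Real.sqrt_mul (by positivity : (0:ℝ) ≤ a + c)]
  apply Real.sqrt_le_sqrt
  nlinarith [sq_nonneg (Real.sqrt a * Real.sqrt d - Real.sqrt c * Real.sqrt b),
    Real.sqrt_nonneg (a * d), Real.sqrt_nonneg (c * b)]

lemma parseval (u : OrthonormalBasis (Fin n) ℂ (EuclideanSpace ℂ (Fin n)))
    (x : EuclideanSpace ℂ (Fin n)) :
    ∑ j, ‖(inner ℂ (u j) x : ℂ)‖ ^ 2 = ‖x‖ ^ 2 := by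
  have h1 : ‖u.repr x‖ = ‖x‖ := u.repr.norm_map x
  rw [← h1, EuclideanSpace.norm_eq, Real.sq_sqrt (by positivity)]
  exact Finset.sum_congr rfl fun j _ => by rw [u.repr_apply_apply]

lemma inner_toEuclideanLin (M : Matrix (Fin n) (Fin n) ℂ) (x y : EuclideanSpace ℂ (Fin n)) :
    (inner ℂ x (Matrix.toEuclideanLin M y) : ℂ)
      = star (WithLp.equiv 2 (Fin n → ℂ) x) ⬝ᵥ (M *ᵥ WithLp.equiv 2 (Fin n → ℂ) y) := by
  rw [EuclideanSpace.inner_eq_star_dotProduct, dotProduct_comm]; rfl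

lemma sqrt_herm (ρ : Matrix (Fin n) (Fin n) ℂ) : (cfc Real.sqrt ρ).IsHermitian :=
  cfc_predicate Real.sqrt ρ

lemma sqrt_mul_self' {ρ : Matrix (Fin n) (Fin n) ℂ} (hρ : ρ.PosSemidef) :
    cfc Real.sqrt ρ * cfc Real.sqrt ρ = ρ := by
  rw [← cfc_mul Real.sqrt Real.sqrt ρ]
  conv_rhs => rw [← cfc_id' ℝ ρ hρ.1.isSelfAdjoint]
  refine cfc_congr fun x hx => ?_
  rw [hρ.1.spectrum_real_eq_range_eigenvalues] at hx
  obtain ⟨i, rfl⟩ := hx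
  exact Real.mul_self_sqrt (hρ.eigenvalues_nonneg i)

lemma quad_eq {ρ : Matrix (Fin n) (Fin n) ℂ} (hρ : ρ.PosSemidef)
    (x : EuclideanSpace ℂ (Fin n)) :
    ‖Matrix.toEuclideanLin (cfc Real.sqrt ρ) x‖ ^ 2
      = (star (WithLp.equiv 2 (Fin n → ℂ) x) ⬝ᵥ (ρ *ᵥ WithLp.equiv 2 (Fin n → ℂ) x)).re := by
  have h2 : (inner ℂ (Matrix.toEuclideanLin (cfc Real.sqrt ρ) x) (Matrix.toEuclideanLin (cfc Real.sqrt ρ) x) : ℂ)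
      = star (WithLp.equiv 2 (Fin n → ℂ) x) ⬝ᵥ (ρ *ᵥ WithLp.equiv 2 (Fin n → ℂ) x) := by
    rw [EuclideanSpace.inner_eq_star_dotProduct, dotProduct_comm]
    show star (cfc Real.sqrt ρ *ᵥ WithLp.equiv 2 (Fin n → ℂ) x) ⬝ᵥ
      (cfc Real.sqrt ρ *ᵥ WithLp.equiv 2 (Fin n → ℂ) x) = _
    rw [Matrix.star_mulVec, ← Matrix.dotProduct_mulVec, Matrix.mulVec_mulVec]
    rw [(sqrt_herm ρ).eq, sqrt_mul_self' hρ]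
  rw [← h2]
  exact (inner_self_eq_norm_sq (𝕜 := ℂ) _).symm

lemma vecMulVec_mulVec' (a b x : Fin n → ℂ) :
    Matrix.vecMulVec a b *ᵥ x = (b ⬝ᵥ x) • a := by
  funext i
  simp only [Matrix.mulVec, dotProduct, Matrix.vecMulVec_apply, Pi.smul_apply, smul_eq_mul,
    Finset.sum_mul]
  exact Finset.sum_congr rfl fun j _ => by ring

lemma cs_aux {n : ℕ} (s : Finset (Fin n)) (a b : Fin n → ℝ) (ha : ∀ j, 0 ≤ a j)
    (hb : ∀ j, 0 ≤ b j) :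
    ∑ j ∈ s, a j * b j ≤ Real.sqrt (∑ j ∈ s, a j ^ 2) * Real.sqrt (∑ j ∈ s, b j ^ 2) := by
  have h := Finset.sum_mul_sq_le_sq_mul_sq s a b
  have hnn : 0 ≤ ∑ j ∈ s, a j * b j := Finset.sum_nonneg fun j _ => mul_nonneg (ha j) (hb j)
  calc ∑ j ∈ s, a j * b j = Real.sqrt ((∑ j ∈ s, a j * b j) ^ 2) := (Real.sqrt_sq hnn).symm
    _ ≤ Real.sqrt ((∑ j ∈ s, a j ^ 2) * ∑ j ∈ s, b j ^ 2) := Real.sqrt_le_sqrt h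
    _ = _ := Real.sqrt_mul (Finset.sum_nonneg fun j _ => sq_nonneg _) _

set_option maxHeartbeats 2000000 in
/-- Core analytic estimate. -/
lemma core (u : OrthonormalBasis (Fin n) ℂ (EuclideanSpace ℂ (Fin n)))
    (ψ : EuclideanSpace ℂ (Fin n)) (hψ : ‖ψ‖ = 1)
    (g : EuclideanSpace ℂ (Fin n) →ₗ[ℂ] EuclideanSpace ℂ (Fin n)) (j₀ : Fin n) (L : ℝ)
    (hL : 0 ≤ L)
    (hd : ‖g (u j₀)‖ ^ 2 = ‖(inner ℂ (u j₀) ψ : ℂ)‖ ^ 2 - L)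
    (hsum : ∑ j, ‖g (u j)‖ ^ 2 = 1) :
    ‖g ψ‖ ^ 2 ≤ 1 - L ^ 2 := by
  obtain ⟨γ, hγ⟩ : ∃ γ : Fin n → ℂ, γ = fun j => (inner ℂ (u j) ψ : ℂ) := ⟨_, rfl⟩
  obtain ⟨c, hc⟩ : ∃ c : ℝ, c = ‖γ j₀‖ ^ 2 := ⟨_, rfl⟩
  have hd : ‖g (u j₀)‖ ^ 2 = c - L := by rw [hc, hγ]; exact hd
  have hpar : ∑ j, ‖γ j‖ ^ 2 = 1 := by
    rw [hγ]; simpa [hψ] using parseval u ψ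
  have hcL : 0 ≤ c - L := by rw [← hd]; positivity
  have hc1 : c ≤ 1 := by
    rw [hc]
    calc ‖γ j₀‖ ^ 2 ≤ ∑ j, ‖γ j‖ ^ 2 :=
          Finset.single_le_sum (f := fun j => ‖γ j‖ ^ 2) (fun j _ => by positivity)
            (Finset.mem_univ j₀)
      _ = 1 := hpar
  have hL1 : L ≤ 1 := le_trans (by linarith) hc1
  -- decomposition
  have hdec : ψ = ∑ j, γ j • u j := by rw [hγ]; exact (u.sum_repr' ψ).symm
  have hgψ : g ψ = γ j₀ • g (u j₀) + ∑ j ∈ Finset.univ.erase j₀, γ j • g (u j) := by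
    conv_lhs => rw [hdec]
    rw [map_sum]
    rw [← Finset.add_sum_erase _ _ (Finset.mem_univ j₀)]
    simp [_root_.map_smul]
  have hparse : ∑ j ∈ Finset.univ.erase j₀, ‖γ j‖ ^ 2 = 1 - c := by
    have h2 := hpar
    rw [← Finset.add_sum_erase _ _ (Finset.mem_univ j₀)] at h2
    rw [← hc] at h2
    linarith [h2]
  have hdsum : ∑ j ∈ Finset.univ.erase j₀, ‖g (u j)‖ ^ 2 = 1 - (c - L) := by
    rw [← Finset.add_sum_erase _ _ (Finset.mem_univ j₀)] at hsum
    rw [hd] at hsum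
    linarith [hsum]
  -- norm bound
  have hb1 : ‖g ψ‖ ≤ Real.sqrt c * Real.sqrt (c - L)
      + Real.sqrt (1 - c) * Real.sqrt (1 - (c - L)) := by
    rw [hgψ]
    refine le_trans (norm_add_le _ _) (add_le_add ?_ ?_)
    · rw [norm_smul]
      have h1 : ‖γ j₀‖ = Real.sqrt c := by rw [hc, Real.sqrt_sq (norm_nonneg _)]
      have h2 : ‖g (u j₀)‖ = Real.sqrt (c - L) := by
        rw [← hd, Real.sqrt_sq (norm_nonneg _)]
      rw [h1, h2]
    · refine le_trans (norm_sum_le _ _) ?_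
      have e1 : ∑ j ∈ Finset.univ.erase j₀, ‖γ j • g (u j)‖
          = ∑ j ∈ Finset.univ.erase j₀, ‖γ j‖ * ‖g (u j)‖ :=
        Finset.sum_congr rfl fun j _ => norm_smul _ _
      rw [e1]
      have e2 := cs_aux (Finset.univ.erase j₀) (fun j => ‖γ j‖) (fun j => ‖g (u j)‖)
        (fun j => norm_nonneg _) (fun j => norm_nonneg _)
      rw [hparse, hdsum] at e2
      exact e2
  have hb2 : Real.sqrt c * Real.sqrt (c - L)
      + Real.sqrt (1 - c) * Real.sqrt (1 - (c - L)) ≤ Real.sqrt (1 - L ^ 2) := by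
    have : Real.sqrt c * Real.sqrt (c - L) = Real.sqrt (c - L) * Real.sqrt c := mul_comm _ _
    rw [this]
    have h1c : (0:ℝ) ≤ 1 - c := by linarith
    have := sqrt_cs hcL (by linarith : (0:ℝ) ≤ c) h1c (by linarith : (0:ℝ) ≤ 1 - (c - L))
    calc Real.sqrt (c - L) * Real.sqrt c + Real.sqrt (1 - c) * Real.sqrt (1 - (c - L))
        ≤ Real.sqrt (c - L + (1 - c)) * Real.sqrt (c + (1 - (c - L))) := this
      _ = Real.sqrt (1 - L) * Real.sqrt (1 + L) := by ring_nf
      _ = Real.sqrt (1 - L ^ 2) := by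
          rw [← Real.sqrt_mul (by linarith)]
          ring_nf
  have hb3 : ‖g ψ‖ ≤ Real.sqrt (1 - L ^ 2) := le_trans hb1 hb2
  calc ‖g ψ‖ ^ 2 ≤ Real.sqrt (1 - L ^ 2) ^ 2 := by
        exact pow_le_pow_left₀ (norm_nonneg _) hb3 2
    _ = 1 - L ^ 2 := Real.sq_sqrt (by nlinarith)

lemma dot_conj (v w : Fin n → ℂ) :
    star w ⬝ᵥ v = (starRingEnd ℂ) (star v ⬝ᵥ w) := by
  simp only [dotProduct, map_sum, _root_.map_mul, Pi.star_apply, Complex.star_def,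
    Complex.conj_conj]
  exact Finset.sum_congr rfl fun i _ => by ring

end TDAux

set_option maxHeartbeats 2000000 in
/-- If `H` is Hermitian with simple lowest eigenvalue `λ₀`, unit ground
eigenvector `ψ₀`, and spectral gap `Δ > 0`, then for any density matrix `ρ`, the trace
distance to the ground state projector `σ = |ψ₀⟩⟨ψ₀|` satisfies
`D(ρ,σ) = (1/2)‖ρ - σ‖₁ ≤ √((Tr[Hρ] - λ₀)/Δ)`. -/
theorem trace_distance_le_sqrt_energy_over_gap {n : ℕ}
    (H ρ : Matrix (Fin n) (Fin n) ℂ)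
    (hH : H.IsHermitian) (hρ : ρ.PosSemidef) (hρtr : ρ.trace = 1)
    (i₀ : Fin n) (Δ : ℝ) (hΔ : 0 < Δ)
    (hgap : ∀ j : Fin n, j ≠ i₀ → hH.eigenvalues i₀ + Δ ≤ hH.eigenvalues j) :
    (1/2 : ℝ) * traceNorm (ρ - vecMulVec (hH.eigenvectorBasis i₀ : Fin n → ℂ)
        (star (hH.eigenvectorBasis i₀ : Fin n → ℂ))) ≤
      Real.sqrt ((((H * ρ).trace).re - hH.eigenvalues i₀) / Δ) := by
  classical
  set ψ' : Fin n → ℂ := (hH.eigenvectorBasis i₀ : Fin n → ℂ) with hψ'def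
  have hσH : (vecMulVec ψ' (star ψ')).IsHermitian := by
    show (vecMulVec ψ' (star ψ'))ᴴ = _
    ext i j
    simp [Matrix.conjTranspose_apply, Matrix.vecMulVec_apply, mul_comm]
  have hA : (ρ - vecMulVec ψ' (star ψ')).IsHermitian := hρ.1.sub hσH
  -- abbreviations (opaque)
  obtain ⟨lam, hlam⟩ : ∃ l : Fin n → ℝ, l = hA.eigenvalues := ⟨_, rfl⟩
  obtain ⟨d, hddef⟩ : ∃ d : Fin n → ℝ, d = fun j => (star (hA.eigenvectorBasis j : Fin n → ℂ)
      ⬝ᵥ (ρ *ᵥ (hA.eigenvectorBasis j : Fin n → ℂ))).re := ⟨_, rfl⟩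
  obtain ⟨sσ, hsdef⟩ : ∃ s : Fin n → ℝ, s = fun j =>
      ‖(inner ℂ (hA.eigenvectorBasis j) (hH.eigenvectorBasis i₀) : ℂ)‖ ^ 2 := ⟨_, rfl⟩
  obtain ⟨p, hpdef⟩ : ∃ p : ℝ, p = (star ψ' ⬝ᵥ (ρ *ᵥ ψ')).re := ⟨_, rfl⟩
  have hdnn : ∀ j, 0 ≤ d j := fun j => by rw [hddef]; exact hρ.re_dotProduct_nonneg _
  have hpnn : 0 ≤ p := by rw [hpdef]; exact hρ.re_dotProduct_nonneg _
  -- trace of ρ in the eigenbasis of A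
  have hdsum : ∑ j, d j = 1 := by
    have h := TDAux.trace_eq_sum_dot (ρ := ρ) hA
    rw [hρtr] at h
    have h2 := congrArg Complex.re h
    rw [Complex.re_sum] at h2
    simp only [hddef]
    exact h2.symm
  -- eigenvalue identity lam = d - sσ
  have hlameq : ∀ j, lam j = d j - sσ j := by
    intro j
    have hsplit : star (hA.eigenvectorBasis j : Fin n → ℂ)
        ⬝ᵥ ((ρ - vecMulVec ψ' (star ψ')) *ᵥ (hA.eigenvectorBasis j : Fin n → ℂ))
        = (star (hA.eigenvectorBasis j : Fin n → ℂ)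
            ⬝ᵥ (ρ *ᵥ (hA.eigenvectorBasis j : Fin n → ℂ)))
          - (star (hA.eigenvectorBasis j : Fin n → ℂ)
            ⬝ᵥ ((vecMulVec ψ' (star ψ')) *ᵥ (hA.eigenvectorBasis j : Fin n → ℂ))) := by
      rw [Matrix.sub_mulVec, dotProduct_sub]
    have hev : lam j = RCLike.re (star (hA.eigenvectorBasis j : Fin n → ℂ)
        ⬝ᵥ ((ρ - vecMulVec ψ' (star ψ')) *ᵥ (hA.eigenvectorBasis j : Fin n → ℂ))) := by
      rw [hlam]; exact hA.eigenvalues_eq j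
    rw [hev, hsplit, map_sub]
    have hd' : RCLike.re (star (hA.eigenvectorBasis j : Fin n → ℂ)
        ⬝ᵥ (ρ *ᵥ (hA.eigenvectorBasis j : Fin n → ℂ))) = d j := by rw [hddef]; rfl
    have hσ' : RCLike.re (star (hA.eigenvectorBasis j : Fin n → ℂ)
        ⬝ᵥ ((vecMulVec ψ' (star ψ')) *ᵥ (hA.eigenvectorBasis j : Fin n → ℂ))) = sσ j := by
      have hq : star (hA.eigenvectorBasis j : Fin n → ℂ)
          ⬝ᵥ ((vecMulVec ψ' (star ψ')) *ᵥ (hA.eigenvectorBasis j : Fin n → ℂ))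
          = (starRingEnd ℂ) (star (hA.eigenvectorBasis j : Fin n → ℂ) ⬝ᵥ ψ')
            * (star (hA.eigenvectorBasis j : Fin n → ℂ) ⬝ᵥ ψ') := by
        rw [TDAux.vecMulVec_mulVec', dotProduct_smul, TDAux.dot_conj, smul_eq_mul]
      rw [hq, mul_comm, Complex.mul_conj]
      have : Complex.normSq (star (hA.eigenvectorBasis j : Fin n → ℂ) ⬝ᵥ ψ')
          = sσ j := by
        rw [hsdef]
        show _ = ‖inner ℂ _ _‖ ^ 2
        rw [EuclideanSpace.inner_eq_star_dotProduct, dotProduct_comm, Complex.normSq_eq_norm_sq]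
      rw [← this]
      simp
    rw [hd', hσ']
  -- Parseval
  have hψnorm : ‖(hH.eigenvectorBasis i₀ : EuclideanSpace ℂ (Fin n))‖ = 1 :=
    hH.eigenvectorBasis.orthonormal.1 i₀
  have hssum : ∑ j, sσ j = 1 := by
    simp only [hsdef]
    have := TDAux.parseval hA.eigenvectorBasis (hH.eigenvectorBasis i₀)
    rw [hψnorm, one_pow] at this
    exact this
  have hlamsum : ∑ j, lam j = 0 := by
    rw [Finset.sum_congr rfl (fun j _ => hlameq j), Finset.sum_sub_distrib, hdsum, hssum]
    ring
  -- δ coefficients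
  obtain ⟨δ, hδdef⟩ : ∃ δ : Fin n → ℂ,
      δ = fun a => star ψ' ⬝ᵥ (hA.eigenvectorBasis a : Fin n → ℂ) := ⟨_, rfl⟩
  have hδs : ∀ j, δ j = 0 → sσ j = 0 := by
    intro j h0
    rw [hδdef] at h0
    simp only at h0
    rw [TDAux.dot_conj] at h0
    have hz : star (hA.eigenvectorBasis j : Fin n → ℂ) ⬝ᵥ ψ' = 0 := by
      have := congrArg (starRingEnd ℂ) h0
      simpa using this
    have : (inner ℂ (hA.eigenvectorBasis j) (hH.eigenvectorBasis i₀) : ℂ) = 0 := by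
      rw [EuclideanSpace.inner_eq_star_dotProduct, dotProduct_comm]; exact hz
    rw [hsdef]
    simp [this]
  have hδne : ∀ j, lam j < 0 → δ j ≠ 0 := by
    intro j hj h0
    have := hlameq j
    have hs0 := hδs j h0
    have := hdnn j
    linarith
  -- eigen-equation in complex-scalar form
  have hmul : ∀ a, (ρ - vecMulVec ψ' (star ψ')) *ᵥ (hA.eigenvectorBasis a : Fin n → ℂ)
      = ((lam a : ℝ) : ℂ) • (hA.eigenvectorBasis a : Fin n → ℂ) := by
    intro a
    rw [hlam]
    refine (hA.mulVec_eigenvectorBasis a).trans ?_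
    funext i
    simp only [Pi.smul_apply, Complex.real_smul, smul_eq_mul]
  have hortho : ∀ a b, star (hA.eigenvectorBasis a : Fin n → ℂ)
      ⬝ᵥ (hA.eigenvectorBasis b : Fin n → ℂ) = if a = b then 1 else 0 := by
    intro a b
    have := orthonormal_iff_ite.mp hA.eigenvectorBasis.orthonormal a b
    rw [EuclideanSpace.inner_eq_star_dotProduct, dotProduct_comm] at this
    exact this
  -- uniqueness of the negative eigenvalue
  have huniq : ∀ j k, j ≠ k → lam j < 0 → lam k < 0 → False := by
    intro j k hjk hj hk
    obtain ⟨x', hx'⟩ : ∃ x' : Fin n → ℂ,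
        x' = δ k • (hA.eigenvectorBasis j : Fin n → ℂ)
          - δ j • (hA.eigenvectorBasis k : Fin n → ℂ) := ⟨_, rfl⟩
    have hψx : star ψ' ⬝ᵥ x' = 0 := by
      rw [hx', dotProduct_sub, dotProduct_smul, dotProduct_smul]
      rw [hδdef]
      simp only [smul_eq_mul]
      ring
    have hσx : (vecMulVec ψ' (star ψ')) *ᵥ x' = 0 := by
      rw [TDAux.vecMulVec_mulVec', hψx, zero_smul]
    have hρx : ρ *ᵥ x' = (ρ - vecMulVec ψ' (star ψ')) *ᵥ x' := by
      rw [Matrix.sub_mulVec, hσx, sub_zero]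
    have hAx : (ρ - vecMulVec ψ' (star ψ')) *ᵥ x'
        = (δ k * (lam j : ℂ)) • (hA.eigenvectorBasis j : Fin n → ℂ)
          - (δ j * (lam k : ℂ)) • (hA.eigenvectorBasis k : Fin n → ℂ) := by
      rw [hx', Matrix.mulVec_sub, Matrix.mulVec_smul, Matrix.mulVec_smul, hmul j, hmul k,
        smul_smul, smul_smul]
    have hquadx : star x' ⬝ᵥ ((ρ - vecMulVec ψ' (star ψ')) *ᵥ x')
        = (starRingEnd ℂ) (δ k) * δ k * (lam j : ℂ)
          + (starRingEnd ℂ) (δ j) * δ j * (lam k : ℂ) := by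
      rw [hAx, hx']
      rw [star_sub, star_smul, star_smul]
      rw [sub_dotProduct, smul_dotProduct, smul_dotProduct,
        dotProduct_sub, dotProduct_sub,
        dotProduct_smul, dotProduct_smul, dotProduct_smul,
        dotProduct_smul]
      rw [hortho j j, hortho j k, hortho k j, hortho k k]
      rw [if_pos rfl, if_pos rfl, if_neg hjk, if_neg (Ne.symm hjk)]
      simp only [smul_eq_mul, mul_zero, mul_one, star_trivial]
      ring_nf
      simp [Complex.star_def]
      ring
    have hre : (star x' ⬝ᵥ (ρ *ᵥ x')).re = ‖δ k‖ ^ 2 * lam j + ‖δ j‖ ^ 2 * lam k := by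
      rw [hρx, hquadx]
      have e1 : (starRingEnd ℂ) (δ k) * δ k = ((‖δ k‖ ^ 2 : ℝ) : ℂ) := by
        rw [mul_comm, Complex.mul_conj]
        norm_cast
        rw [Complex.normSq_eq_norm_sq]
      have e2 : (starRingEnd ℂ) (δ j) * δ j = ((‖δ j‖ ^ 2 : ℝ) : ℂ) := by
        rw [mul_comm, Complex.mul_conj]
        norm_cast
        rw [Complex.normSq_eq_norm_sq]
      rw [e1, e2, ← Complex.ofReal_mul, ← Complex.ofReal_mul, ← Complex.ofReal_add,
        Complex.ofReal_re]
    have h1 : ‖δ k‖ ^ 2 * lam j ≤ 0 :=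
      mul_nonpos_iff.mpr (Or.inl ⟨by positivity, le_of_lt hj⟩)
    have h2 : ‖δ j‖ ^ 2 * lam k < 0 := by
      have : (0:ℝ) < ‖δ j‖ ^ 2 :=
        pow_pos (norm_pos_iff.mpr (hδne j hj)) 2
      exact mul_neg_of_pos_of_neg this hk
    have hcontra : (star x' ⬝ᵥ (ρ *ᵥ x')).re < 0 := by rw [hre]; linarith
    exact absurd (hρ.re_dotProduct_nonneg x') (not_le.mpr hcontra)
  -- energy bound
  obtain ⟨e, hedef⟩ : ∃ e : Fin n → ℝ, e = fun j => (star (hH.eigenvectorBasis j : Fin n → ℂ)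
      ⬝ᵥ (ρ *ᵥ (hH.eigenvectorBasis j : Fin n → ℂ))).re := ⟨_, rfl⟩
  have henn : ∀ j, 0 ≤ e j := fun j => by rw [hedef]; exact hρ.re_dotProduct_nonneg _
  have hei₀ : e i₀ = p := by rw [hedef, hpdef]
  have hesum : ∑ j, e j = 1 := by
    have h := TDAux.trace_eq_sum_dot (ρ := ρ) hH
    rw [hρtr] at h
    have h2 := congrArg Complex.re h
    rw [Complex.re_sum] at h2
    simp only [hedef]
    exact h2.symm
  have hE : ((H * ρ).trace).re = ∑ j, hH.eigenvalues j * e j := by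
    have h := congrArg Complex.re (TDAux.trace_mul_eq_sum (ρ := ρ) hH)
    rw [Complex.re_sum] at h
    rw [h]
    refine Finset.sum_congr rfl fun j _ => ?_
    rw [hedef]
    simp only [Complex.mul_re, Complex.ofReal_re, Complex.ofReal_im, zero_mul, sub_zero]
  have henergy : hH.eigenvalues i₀ + Δ * (1 - p) ≤ ((H * ρ).trace).re := by
    rw [hE]
    have hsplit : ∑ j, hH.eigenvalues j * e j
        = hH.eigenvalues i₀ * e i₀ + ∑ j ∈ Finset.univ.erase i₀, hH.eigenvalues j * e j :=
      (Finset.add_sum_erase _ _ (Finset.mem_univ i₀)).symm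
    have herase : ∑ j ∈ Finset.univ.erase i₀, e j = 1 - e i₀ := by
      have := (Finset.add_sum_erase _ e (Finset.mem_univ i₀)).symm
      rw [hesum] at this
      linarith
    have hlow : (hH.eigenvalues i₀ + Δ) * (1 - e i₀)
        ≤ ∑ j ∈ Finset.univ.erase i₀, hH.eigenvalues j * e j := by
      calc (hH.eigenvalues i₀ + Δ) * (1 - e i₀)
          = ∑ j ∈ Finset.univ.erase i₀, (hH.eigenvalues i₀ + Δ) * e j := by
            rw [← Finset.mul_sum, herase]
        _ ≤ _ := Finset.sum_le_sum fun j hj =>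
            mul_le_mul_of_nonneg_right (hgap j (Finset.ne_of_mem_erase hj)) (henn j)
    have hring : hH.eigenvalues i₀ * e i₀ + (hH.eigenvalues i₀ + Δ) * (1 - e i₀)
        = hH.eigenvalues i₀ + Δ * (1 - e i₀) := by ring
    rw [hsplit, hei₀] at *
    nlinarith [hlow, hring]
  have hdiv : 1 - p ≤ (((H * ρ).trace).re - hH.eigenvalues i₀) / Δ := by
    rw [le_div_iff₀ hΔ]
    nlinarith [henergy]
  -- case split on existence of a negative eigenvalue
  by_cases hneg : ∀ j, 0 ≤ lam j
  · have hzero : ∀ j ∈ Finset.univ, lam j = 0 :=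
      (Finset.sum_eq_zero_iff_of_nonneg (fun j _ => hneg j)).mp hlamsum
    have : traceNorm (ρ - vecMulVec ψ' (star ψ')) = 0 := by
      rw [TDAux.traceNorm_hermitian hA]
      refine Finset.sum_eq_zero fun j _ => ?_
      rw [← hlam, hzero j (Finset.mem_univ j)]
      simp
    rw [this]
    simpa using Real.sqrt_nonneg _
  · push_neg at hneg
    obtain ⟨j₁, hj₁⟩ := hneg
    have hLpos : 0 < -lam j₁ := by linarith
    have hother : ∀ j, j ≠ j₁ → 0 ≤ lam j := fun j hj =>
      le_of_not_gt (fun h => huniq j j₁ hj h hj₁)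
    have htn : traceNorm (ρ - vecMulVec ψ' (star ψ')) = 2 * (-lam j₁) := by
      rw [TDAux.traceNorm_hermitian hA]
      have h1 : ∑ i, |hA.eigenvalues i| = |lam j₁| + ∑ j ∈ Finset.univ.erase j₁, |lam j| := by
        rw [← hlam, ← Finset.add_sum_erase _ _ (Finset.mem_univ j₁)]
      have h2 : ∑ j ∈ Finset.univ.erase j₁, |lam j| = ∑ j ∈ Finset.univ.erase j₁, lam j :=
        Finset.sum_congr rfl fun j hj => abs_of_nonneg (hother j (Finset.ne_of_mem_erase hj))
      have h3 : lam j₁ + ∑ j ∈ Finset.univ.erase j₁, lam j = 0 := by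
        rw [Finset.add_sum_erase _ _ (Finset.mem_univ j₁)]
        exact hlamsum
      rw [h1, h2, abs_of_neg hj₁]
      linarith
    -- core estimate
    have hcore : p ≤ 1 - (-lam j₁) ^ 2 := by
      have happ := TDAux.core hA.eigenvectorBasis (hH.eigenvectorBasis i₀) hψnorm
        (Matrix.toEuclideanLin (cfc Real.sqrt ρ)) j₁ (-lam j₁) (le_of_lt hLpos) ?_ ?_
      · have hgψ : ‖Matrix.toEuclideanLin (cfc Real.sqrt ρ) (hH.eigenvectorBasis i₀)‖ ^ 2 = p := by
          rw [TDAux.quad_eq hρ, hpdef]; rfl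
        rw [← hgψ]
        exact happ
      · have hq : ‖Matrix.toEuclideanLin (cfc Real.sqrt ρ) (hA.eigenvectorBasis j₁)‖ ^ 2 = d j₁ := by
          rw [TDAux.quad_eq hρ, hddef]; rfl
        have hs : ‖(inner ℂ (hA.eigenvectorBasis j₁) (hH.eigenvectorBasis i₀) : ℂ)‖ ^ 2
            = sσ j₁ := by rw [hsdef]
        rw [hq, hs]
        have := hlameq j₁
        linarith
      · have hq : ∀ j, ‖Matrix.toEuclideanLin (cfc Real.sqrt ρ) (hA.eigenvectorBasis j)‖ ^ 2 = d j :=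
          fun j => by rw [TDAux.quad_eq hρ, hddef]; rfl
        rw [Finset.sum_congr rfl (fun j _ => hq j)]
        exact hdsum
    rw [htn]
    have hL2 : (-lam j₁) ^ 2 ≤ 1 - p := by linarith
    have hLle : -lam j₁ ≤ Real.sqrt (1 - p) := by
      rw [show -lam j₁ = Real.sqrt ((-lam j₁) ^ 2) from (Real.sqrt_sq (le_of_lt hLpos)).symm]
      exact Real.sqrt_le_sqrt hL2
    calc (1/2 : ℝ) * (2 * (-lam j₁)) = -lam j₁ := by ring
      _ ≤ Real.sqrt (1 - p) := hLle
      _ ≤ Real.sqrt ((((H * ρ).trace).re - hH.eigenvalues i₀) / Δ) := Real.sqrt_le_sqrt hdiv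
end

section
/- Let f : ℝ → ℂ be integrable, H Hermitian on a finite-dimensional Hilbert space with spectral decomposition H = Σ_i λ_i |ψ_i⟩⟨ψ_i|, and A a bounded operator. Define K = ∫_ℝ f(s) e^{iHs} A e^{-iHs} ds and the Fourier transform f̂(ω) = ∫_ℝ f(s) e^{iωs} ds. Then ⟨ψ_i| K |ψ_j⟩ = f̂(λ_i - λ_j)·⟨ψ_i| A |ψ_j⟩ for all i, j. -/
open Matrix MeasureTheory
open scoped Matrix.Norms.L2Operator

private lemma exp_mulVec_eigen {n : ℕ} (M : Matrix (Fin n) (Fin n) ℂ) (v : Fin n → ℂ) (μ : ℂ)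
    (h : M *ᵥ v = μ • v) :
    NormedSpace.exp M *ᵥ v = Complex.exp μ • v := by
  have hpow : ∀ k : ℕ, (M ^ k) *ᵥ v = (μ ^ k) • v := by
    intro k; induction k with
    | zero => simp
    | succ k ih =>
      rw [pow_succ, ← mulVec_mulVec, h, mulVec_smul, ih, smul_smul, mul_comm, pow_succ]
  let L : Matrix (Fin n) (Fin n) ℂ →ₗ[ℂ] (Fin n → ℂ) :=
    { toFun := fun N => N *ᵥ v
      map_add' := fun N N' => add_mulVec N N' v
      map_smul' := fun c N => smul_mulVec c N v }
  have hsum := NormedSpace.expSeries_summable' (𝕂 := ℂ) M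
  have htsum := L.toContinuousLinearMap.map_tsum hsum
  rw [NormedSpace.exp_eq_tsum ℂ]
  have h2 : ∀ k : ℕ, L (((k.factorial : ℂ))⁻¹ • M ^ k) = (((k.factorial : ℂ))⁻¹ * μ ^ k) • v := by
    intro k
    simp only [L, LinearMap.coe_mk, AddHom.coe_mk, smul_mulVec, hpow, smul_smul]
  calc (∑' k : ℕ, ((k.factorial : ℂ))⁻¹ • M ^ k) *ᵥ v
      = L.toContinuousLinearMap (∑' k : ℕ, ((k.factorial : ℂ))⁻¹ • M ^ k) := rfl
    _ = ∑' k : ℕ, (((k.factorial : ℂ))⁻¹ * μ ^ k) • v := by rw [htsum]; exact tsum_congr h2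
    _ = (∑' k : ℕ, ((k.factorial : ℂ))⁻¹ * μ ^ k) • v := by
        refine Summable.tsum_smul_const ?_ v
        simpa [smul_eq_mul] using NormedSpace.expSeries_summable' (𝕂 := ℂ) (𝔸 := ℂ) μ
    _ = Complex.exp μ • v := by
        rw [Complex.exp_eq_exp_ℂ, NormedSpace.exp_eq_tsum ℂ]; simp [smul_eq_mul]

/-- For integrable `f`, Hermitian `H` with orthonormal eigenbasis `ψ_i` and
eigenvalues `λ_i`, and any matrix `A`, the operator
`K = ∫ f(s) e^{iHs} A e^{-iHs} ds` has matrix elements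
`⟨ψ_i|K|ψ_j⟩ = f̂(λ_i - λ_j) ⟨ψ_i|A|ψ_j⟩`, where `f̂(ω) = ∫ f(s) e^{iωs} ds`. -/
theorem jump_operator_matrix_elements {n : ℕ}
    (H A : Matrix (Fin n) (Fin n) ℂ) (hH : H.IsHermitian)
    (f : ℝ → ℂ) (hf : Integrable f) (i j : Fin n) :
    star (hH.eigenvectorBasis i : Fin n → ℂ) ⬝ᵥ
        (∫ s : ℝ, f s • (NormedSpace.exp ((Complex.I * (s : ℂ)) • H) * A *
          NormedSpace.exp ((-(Complex.I * (s : ℂ))) • H))).mulVec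
        (hH.eigenvectorBasis j : Fin n → ℂ) =
      (∫ s : ℝ, f s * Complex.exp (Complex.I *
          ((hH.eigenvalues i : ℂ) - (hH.eigenvalues j : ℂ)) * s)) *
        (star (hH.eigenvectorBasis i : Fin n → ℂ) ⬝ᵥ
          A.mulVec (hH.eigenvectorBasis j : Fin n → ℂ)) := by
  letI : NormedAlgebra ℚ (Matrix (Fin n) (Fin n) ℂ) := NormedAlgebra.restrictScalars ℚ ℂ _
  haveI : Nonempty (Fin n) := ⟨i⟩
  set v : Fin n → ℂ := (hH.eigenvectorBasis i : Fin n → ℂ)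
  set w : Fin n → ℂ := (hH.eigenvectorBasis j : Fin n → ℂ)
  set lami : ℝ := hH.eigenvalues i
  set lamj : ℝ := hH.eigenvalues j
  -- the integrand
  set F : ℝ → Matrix (Fin n) (Fin n) ℂ := fun s =>
    f s • (NormedSpace.exp ((Complex.I * (s : ℂ)) • H) * A *
      NormedSpace.exp ((-(Complex.I * (s : ℂ))) • H)) with hF
  -- skew-adjointness
  have hskew : ∀ c : ℂ, (starRingEnd ℂ) c = -c →
      NormedSpace.exp (c • H) ∈ unitary (Matrix (Fin n) (Fin n) ℂ) := by
    intro c hc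
    refine NormedSpace.exp_mem_unitary_of_mem_skewAdjoint ?_
    rw [skewAdjoint.mem_iff]
    show (c • H)ᴴ = -(c • H)
    rw [conjTranspose_smul, hH.eq, Complex.star_def, hc, neg_smul]
  have hconj : ∀ s : ℝ, (starRingEnd ℂ) (Complex.I * (s : ℂ)) = -(Complex.I * (s : ℂ)) := by
    intro s; simp [Complex.conj_I, mul_comm]
  -- norm bounds
  have hnorm1 : ∀ s : ℝ, ‖NormedSpace.exp ((Complex.I * (s : ℂ)) • H)‖ = 1 := fun s =>
    CStarRing.norm_of_mem_unitary (hskew _ (hconj s))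
  have hnorm2 : ∀ s : ℝ, ‖NormedSpace.exp ((-(Complex.I * (s : ℂ))) • H)‖ = 1 := by
    intro s
    refine CStarRing.norm_of_mem_unitary (hskew _ ?_)
    simp [Complex.conj_I, mul_comm]
  -- integrability
  have hFcont : Continuous fun s : ℝ => NormedSpace.exp ((Complex.I * (s : ℂ)) • H) * A *
      NormedSpace.exp ((-(Complex.I * (s : ℂ))) • H) := by
    apply Continuous.mul
    apply Continuous.mul
    · exact NormedSpace.exp_continuous.comp ((continuous_const.mul Complex.continuous_ofReal).smul continuous_const)
    · exact continuous_const
    · exact NormedSpace.exp_continuous.comp (((continuous_const.mul Complex.continuous_ofReal).neg).smul continuous_const)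
  have hFint : Integrable F := by
    refine Integrable.mono' (hf.norm.mul_const ‖A‖) ?_ ?_
    · exact (hf.1.smul hFcont.aestronglyMeasurable)
    · filter_upwards with s
      rw [hF]
      simp only [norm_smul]
      gcongr
      calc ‖NormedSpace.exp ((Complex.I * (s : ℂ)) • H) * A *
            NormedSpace.exp ((-(Complex.I * (s : ℂ))) • H)‖
          ≤ ‖NormedSpace.exp ((Complex.I * (s : ℂ)) • H) * A‖ *
            ‖NormedSpace.exp ((-(Complex.I * (s : ℂ))) • H)‖ := norm_mul_le _ _
        _ ≤ ‖NormedSpace.exp ((Complex.I * (s : ℂ)) • H)‖ * ‖A‖ * 1 := by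
            rw [hnorm2]; gcongr; exact norm_mul_le _ _
        _ = ‖A‖ := by rw [hnorm1]; ring
  -- the continuous linear functional M ↦ star v ⬝ᵥ M *ᵥ w
  let L : Matrix (Fin n) (Fin n) ℂ →ₗ[ℂ] ℂ :=
    { toFun := fun M => star v ⬝ᵥ M *ᵥ w
      map_add' := fun M N => by simp [add_mulVec, dotProduct_add]
      map_smul' := fun c M => by simp [smul_mulVec, dotProduct_smul] }
  have hcomm := (L.toContinuousLinearMap.integral_comp_comm hFint).symm
  have hLHS : star v ⬝ᵥ (∫ s : ℝ, F s) *ᵥ w = ∫ s : ℝ, star v ⬝ᵥ (F s) *ᵥ w := by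
    exact_mod_cast hcomm
  rw [hLHS]
  -- pointwise evaluation
  have hpt : ∀ s : ℝ, star v ⬝ᵥ (F s) *ᵥ w =
      (f s * Complex.exp (Complex.I * ((lami : ℂ) - (lamj : ℂ)) * s)) * (star v ⬝ᵥ A *ᵥ w) := by
    intro s
    have hmulw : H *ᵥ w = (lamj : ℝ) • w := hH.mulVec_eigenvectorBasis j
    have hmulv : H *ᵥ v = (lami : ℝ) • v := hH.mulVec_eigenvectorBasis i
    have hw : NormedSpace.exp ((-(Complex.I * (s : ℂ))) • H) *ᵥ w =
        Complex.exp ((-(Complex.I * (s : ℂ))) * (lamj : ℂ)) • w := by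
      refine exp_mulVec_eigen _ _ _ ?_
      rw [smul_mulVec, hmulw]
      ext k
      simp [smul_eq_mul, Complex.real_smul]
      ring
    have hv : (NormedSpace.exp ((Complex.I * (s : ℂ)) • H))ᴴ *ᵥ v =
        Complex.exp ((-(Complex.I * (s : ℂ))) * (lami : ℂ)) • v := by
      rw [← Matrix.exp_conjTranspose, conjTranspose_smul, hH.eq, Complex.star_def, hconj s]
      refine exp_mulVec_eigen _ _ _ ?_
      rw [smul_mulVec, hmulv]
      ext k
      simp [smul_eq_mul, Complex.real_smul]
      ring
    have hvm : star v ᵥ* NormedSpace.exp ((Complex.I * (s : ℂ)) • H) =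
        star ((NormedSpace.exp ((Complex.I * (s : ℂ)) • H))ᴴ *ᵥ v) := by
      rw [star_mulVec, conjTranspose_conjTranspose]
    have key : Complex.exp (Complex.I * (s : ℂ) * (lami : ℂ)) *
        Complex.exp ((-(Complex.I * (s : ℂ))) * (lamj : ℂ)) =
        Complex.exp (Complex.I * ((lami : ℂ) - (lamj : ℂ)) * (s : ℂ)) := by
      rw [← Complex.exp_add]; congr 1; ring
    have hc2 : star (Complex.exp ((-(Complex.I * (s : ℂ))) * (lami : ℂ))) =
        Complex.exp (Complex.I * (s : ℂ) * (lami : ℂ)) := by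
      show (starRingEnd ℂ) _ = _
      rw [← Complex.exp_conj]; congr 1
      simp only [map_neg, _root_.map_mul, Complex.conj_I, Complex.conj_ofReal]
      ring
    rw [hF]
    simp only [smul_mulVec, dotProduct_smul]
    rw [show (NormedSpace.exp ((Complex.I * (s : ℂ)) • H) * A *
          NormedSpace.exp ((-(Complex.I * (s : ℂ))) • H)) *ᵥ w =
        NormedSpace.exp ((Complex.I * (s : ℂ)) • H) *ᵥ
          (A *ᵥ (NormedSpace.exp ((-(Complex.I * (s : ℂ))) • H) *ᵥ w)) from by
      rw [← mulVec_mulVec, ← mulVec_mulVec]]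
    rw [hw, mulVec_smul, mulVec_smul, dotProduct_smul, dotProduct_mulVec, hvm, hv, star_smul,
      smul_dotProduct, hc2, ← key]
    simp only [smul_eq_mul]
    ring
  rw [integral_congr_ae (Filter.Eventually.of_forall hpt)]
  rw [integral_mul_const]
end

section
/- Let T_i(O) = (1/2) I_i ⊗ Tr_i(O) denote the normalized partial trace on qubit i of an N-qubit system, and δ_i = id - T_i. Then for any operator O on (ℂ²)^{⊗N}: O - (Tr O / 2^N)·I = Σ_{i=1}^N δ_i(T_{i-1} ∘ ⋯ ∘ T_1(O)), and consequently ‖O - (Tr O / 2^N)·I‖ ≤ Σ_{i=1}^N ‖δ_i(O)‖, where ‖·‖ is the operator norm. -/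
open Matrix
open scoped Matrix.Norms.L2Operator

/-- An operator on an `N`-qubit system `(ℂ²)^{⊗N}`. -/
abbrev QubitOp (N : ℕ) := Matrix (Fin N → Fin 2) (Fin N → Fin 2) ℂ

/-- The normalized partial trace channel on qubit `i`: `T_i(O) = (1/2) I_i ⊗ Tr_i(O)`. -/
noncomputable def Tsite {N : ℕ} (i : Fin N) (O : QubitOp N) : QubitOp N :=
  fun x y => if x i = y i then
    (1/2 : ℂ) * ∑ b : Fin 2, O (Function.update x i b) (Function.update y i b)
  else 0

/-- The local oscillation map `δ_i = id - T_i`. -/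
noncomputable def deltaSite {N : ℕ} (i : Fin N) (O : QubitOp N) : QubitOp N :=
  O - Tsite i O

/-- The composition `T_k ∘ ⋯ ∘ T_1` of the first `k` normalized partial traces
(`Tprefix k O = T_k(⋯(T_1(O))⋯)`, with sites numbered from `1`). -/
noncomputable def Tprefix {N : ℕ} : ℕ → QubitOp N → QubitOp N
  | 0, O => O
  | (k + 1), O => if h : k < N then Tsite ⟨k, h⟩ (Tprefix k O) else Tprefix k O

-- key sum collapse lemma
lemma sum_eq_update {N : ℕ} (i : Fin N) (x : Fin N → Fin 2) (f : (Fin N → Fin 2) → ℂ) :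
    (∑ u : Fin N → Fin 2, if (∀ j, j ≠ i → x j = u j) then f u else 0)
      = ∑ a : Fin 2, f (Function.update x i a) := by
  have h1 : ∀ a : Fin 2, f (Function.update x i a)
      = ∑ u : Fin N → Fin 2, if u = Function.update x i a then f u else 0 := by
    intro a
    rw [Finset.sum_ite_eq' Finset.univ (Function.update x i a) f]
    simp
  simp_rw [h1]
  rw [Finset.sum_comm]
  refine Finset.sum_congr rfl fun u _ => ?_
  by_cases h : ∀ j, j ≠ i → x j = u j
  · have hu : ∀ a : Fin 2, (u = Function.update x i a) ↔ a = u i := by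
      intro a
      constructor
      · intro he; rw [he]; simp
      · intro ha; subst ha; funext j
        by_cases hj : j = i
        · subst hj; simp
        · rw [Function.update_of_ne hj]; exact (h j hj).symm
    simp_rw [hu]
    rw [if_pos h, Finset.sum_ite_eq' Finset.univ (u i) (fun _ => f u)]
    simp
  · have hne : ∀ a : Fin 2, u ≠ Function.update x i a := by
      intro a he
      exact h fun j hj => by rw [he, Function.update_of_ne hj]
    simp [hne, h]

noncomputable def Lmat {N : ℕ} (i : Fin N) (P : Matrix (Fin 2) (Fin 2) ℂ) : QubitOp N :=
  fun x y => if (∀ j, j ≠ i → x j = y j) then P (x i) (y i) else 0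

lemma Lmat_mul_apply {N : ℕ} (i : Fin N) (P : Matrix (Fin 2) (Fin 2) ℂ) (A : QubitOp N)
    (x y : Fin N → Fin 2) :
    (Lmat i P * A) x y = ∑ a : Fin 2, P (x i) a * A (Function.update x i a) y := by
  rw [Matrix.mul_apply]
  have : ∀ u, Lmat i P x u * A u y
      = if (∀ j, j ≠ i → x j = u j) then P (x i) (u i) * A u y else 0 := by
    intro u; simp [Lmat, ite_mul]
  simp_rw [this]
  rw [sum_eq_update i x (fun u => P (x i) (u i) * A u y)]
  simp

lemma mul_Lmat_apply {N : ℕ} (i : Fin N) (P : Matrix (Fin 2) (Fin 2) ℂ) (A : QubitOp N)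
    (x y : Fin N → Fin 2) :
    (A * Lmat i P) x y = ∑ b : Fin 2, A x (Function.update y i b) * P b (y i) := by
  rw [Matrix.mul_apply]
  have : ∀ v, A x v * Lmat i P v y
      = if (∀ j, j ≠ i → y j = v j) then A x v * P (v i) (y i) else 0 := by
    intro u
    simp only [Lmat, mul_ite, mul_zero]
    congr 1
    simp only [eq_iff_iff]
    constructor
    · intro h j hj; exact (h j hj).symm
    · intro h j hj; exact (h j hj).symm
  simp_rw [this]
  rw [sum_eq_update i y (fun v => A x v * P (v i) (y i))]
  simp

noncomputable def Pmat : Fin 4 → Matrix (Fin 2) (Fin 2) ℂ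
  | 0 => !![1, 0; 0, 1]
  | 1 => !![0, 1; 1, 0]
  | 2 => !![0, -Complex.I; Complex.I, 0]
  | 3 => !![1, 0; 0, -1]

lemma Pmat_complete (s t a b : Fin 2) :
    ∑ p : Fin 4, Pmat p s a * Pmat p b t = if s = t ∧ a = b then 2 else 0 := by
  fin_cases s <;> fin_cases t <;> fin_cases a <;> fin_cases b <;>
    simp [Fin.sum_univ_four, Pmat, Complex.ext_iff] <;> norm_num

lemma Pmat_herm (p : Fin 4) : (Pmat p)ᴴ = Pmat p := by
  fin_cases p <;>
    · ext a b
      fin_cases a <;> fin_cases b <;> simp [Pmat, Complex.ext_iff]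

lemma Pmat_mul_self (p : Fin 4) : Pmat p * Pmat p = 1 := by
  fin_cases p <;>
    · ext a b
      fin_cases a <;> fin_cases b <;>
        simp [Pmat, Matrix.mul_apply, Fin.sum_univ_two, Matrix.one_apply, Complex.ext_iff]

lemma Lmat_mul_Lmat {N : ℕ} (i : Fin N) (P Q : Matrix (Fin 2) (Fin 2) ℂ) :
    Lmat i P * Lmat i Q = Lmat i (P * Q) := by
  ext x y
  rw [Lmat_mul_apply]
  have : ∀ a : Fin 2, Lmat i Q (Function.update x i a) y
      = if (∀ j, j ≠ i → x j = y j) then Q a (y i) else 0 := by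
    intro a
    simp only [Lmat, Function.update_self]
    congr 1
    simp only [eq_iff_iff]
    constructor
    · intro h j hj; rw [← h j hj, Function.update_of_ne hj]
    · intro h j hj; rw [Function.update_of_ne hj]; exact h j hj
  simp_rw [this]
  by_cases h : ∀ j, j ≠ i → x j = y j
  · simp [h, Lmat, Matrix.mul_apply]
  · simp [h, Lmat]

lemma Lmat_one {N : ℕ} (i : Fin N) : Lmat i (1 : Matrix (Fin 2) (Fin 2) ℂ) = 1 := by
  ext x y
  simp only [Lmat, Matrix.one_apply]
  by_cases h : x = y
  · subst h; simp
  · have : ¬ ((∀ j, j ≠ i → x j = y j) ∧ x i = y i) := by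
      intro ⟨h1, h2⟩
      exact h (funext fun j => if hj : j = i then by rw [hj]; exact h2 else h1 j hj)
    by_cases h1 : ∀ j, j ≠ i → x j = y j
    · have h2 : ¬ x i = y i := fun h2 => this ⟨h1, h2⟩
      simp [h1, h2, h]
    · simp [h1, h]

lemma Lmat_conjT {N : ℕ} (i : Fin N) (P : Matrix (Fin 2) (Fin 2) ℂ) (hP : Pᴴ = P) :
    (Lmat i P)ᴴ = Lmat i P := by
  ext x y
  simp only [Matrix.conjTranspose_apply, Lmat]
  by_cases h : ∀ j, j ≠ i → x j = y j
  · have h' : ∀ j, j ≠ i → y j = x j := fun j hj => (h j hj).symm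
    rw [if_pos h, if_pos h']
    have := congrFun (congrFun hP (x i)) (y i)
    simpa [Matrix.conjTranspose_apply] using this
  · have h' : ¬ ∀ j, j ≠ i → y j = x j := fun h' => h fun j hj => (h' j hj).symm
    simp [h, h']

lemma Lmat_unitary {N : ℕ} (i : Fin N) (p : Fin 4) :
    Lmat i (Pmat p) ∈ unitary (QubitOp N) := by
  have h1 : star (Lmat i (Pmat p)) = Lmat i (Pmat p) := by
    rw [Matrix.star_eq_conjTranspose, Lmat_conjT i _ (Pmat_herm p)]
  have h2 : Lmat i (Pmat p) * Lmat i (Pmat p) = 1 := by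
    rw [Lmat_mul_Lmat, Pmat_mul_self, Lmat_one]
  exact ⟨by rw [h1]; exact h2, by rw [h1]; exact h2⟩

lemma norm_Lmat {N : ℕ} (i : Fin N) (p : Fin 4) : ‖Lmat i (Pmat p)‖ = 1 :=
  CStarRing.norm_of_mem_unitary (Lmat_unitary i p)

lemma Tsite_eq_pauli {N : ℕ} (i : Fin N) (A : QubitOp N) :
    Tsite i A = (4 : ℂ)⁻¹ • ∑ p : Fin 4, Lmat i (Pmat p) * A * Lmat i (Pmat p) := by
  ext x y
  have hterm : ∀ p : Fin 4, (Lmat i (Pmat p) * A * Lmat i (Pmat p)) x y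
      = ∑ a : Fin 2, ∑ b : Fin 2,
          Pmat p (x i) a * Pmat p b (y i)
            * A (Function.update x i a) (Function.update y i b) := by
    intro p
    rw [Matrix.mul_assoc, Lmat_mul_apply]
    refine Finset.sum_congr rfl fun a _ => ?_
    rw [mul_Lmat_apply, Finset.mul_sum]
    refine Finset.sum_congr rfl fun b _ => ?_
    ring
  simp only [Matrix.smul_apply, Matrix.sum_apply, hterm, smul_eq_mul]
  rw [Finset.sum_comm]
  have : ∀ a : Fin 2, ∑ p : Fin 4, ∑ b : Fin 2,
      Pmat p (x i) a * Pmat p b (y i) * A (Function.update x i a) (Function.update y i b)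
      = ∑ b : Fin 2, (if x i = y i ∧ a = b then 2 else 0)
          * A (Function.update x i a) (Function.update y i b) := by
    intro a
    rw [Finset.sum_comm]
    refine Finset.sum_congr rfl fun b _ => ?_
    rw [← Finset.sum_mul, Pmat_complete]
  simp_rw [this]
  by_cases h : x i = y i
  · simp only [Tsite, if_pos h, h, true_and]
    have hb : ∀ a : Fin 2, (∑ b : Fin 2,
        (if a = b then (2:ℂ) else 0) * A (Function.update x i a) (Function.update y i b))
        = 2 * A (Function.update x i a) (Function.update y i a) := by
      intro a
      simp [ite_mul]
    simp_rw [hb]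
    rw [Finset.mul_sum, Finset.mul_sum]
    refine Finset.sum_congr rfl fun a _ => ?_
    ring
  · simp only [Tsite, if_neg h, h, false_and, if_false, zero_mul]
    simp

lemma norm_Tsite_le {N : ℕ} (i : Fin N) (A : QubitOp N) : ‖Tsite i A‖ ≤ ‖A‖ := by
  rw [Tsite_eq_pauli]
  rw [norm_smul]
  have h1 : ‖∑ p : Fin 4, Lmat i (Pmat p) * A * Lmat i (Pmat p)‖
      ≤ ∑ p : Fin 4, ‖Lmat i (Pmat p) * A * Lmat i (Pmat p)‖ := norm_sum_le _ _
  have h2 : ∀ p : Fin 4, ‖Lmat i (Pmat p) * A * Lmat i (Pmat p)‖ ≤ ‖A‖ := by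
    intro p
    calc ‖Lmat i (Pmat p) * A * Lmat i (Pmat p)‖
        ≤ ‖Lmat i (Pmat p) * A‖ * ‖Lmat i (Pmat p)‖ := norm_mul_le _ _
      _ ≤ ‖Lmat i (Pmat p)‖ * ‖A‖ * ‖Lmat i (Pmat p)‖ :=
          mul_le_mul_of_nonneg_right (norm_mul_le _ _) (norm_nonneg _)
      _ = ‖A‖ := by rw [norm_Lmat]; ring
  calc ‖(4 : ℂ)⁻¹‖ * ‖∑ p : Fin 4, Lmat i (Pmat p) * A * Lmat i (Pmat p)‖
      ≤ ‖(4 : ℂ)⁻¹‖ * ∑ p : Fin 4, ‖A‖ := by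
        refine mul_le_mul_of_nonneg_left (h1.trans ?_) (norm_nonneg _)
        exact Finset.sum_le_sum fun p _ => h2 p
    _ = ‖A‖ := by
        simp [Finset.sum_const]

lemma Tsite_sub {N : ℕ} (i : Fin N) (A B : QubitOp N) :
    Tsite i (A - B) = Tsite i A - Tsite i B := by
  ext x y
  by_cases h : x i = y i <;>
    simp [Tsite, h, mul_sub, Finset.sum_sub_distrib]

lemma Tsite_comm {N : ℕ} {i j : Fin N} (hij : i ≠ j) (A : QubitOp N) :
    Tsite i (Tsite j A) = Tsite j (Tsite i A) := by
  have hji : j ≠ i := hij.symm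
  ext x y
  by_cases h1 : x i = y i <;> by_cases h2 : x j = y j <;>
    simp only [Tsite, h1, h2, if_true, if_false, Function.update_of_ne hij,
      Function.update_of_ne hji, Finset.mul_sum, mul_ite, mul_zero, if_true, if_false,
      Finset.sum_ite_irrel, Finset.sum_const_zero]
  · rw [Finset.sum_comm]
    refine Finset.sum_congr rfl fun a _ => Finset.sum_congr rfl fun b _ => ?_
    rw [Function.update_comm hij, Function.update_comm hij]

lemma Tsite_Tprefix_comm {N : ℕ} (i : Fin N) (k : ℕ) (hk : k ≤ (i : ℕ)) (O : QubitOp N) :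
    Tsite i (Tprefix k O) = Tprefix k (Tsite i O) := by
  induction k with
  | zero => rfl
  | succ k ih =>
    have hk' : k ≤ (i : ℕ) := Nat.le_of_succ_le hk
    have hkN : k < N := lt_of_lt_of_le (Nat.lt_of_succ_le hk) (le_of_lt i.isLt)
    have hne : (⟨k, hkN⟩ : Fin N) ≠ i := by
      intro h
      have : k = (i : ℕ) := congrArg Fin.val h
      omega
    simp only [Tprefix, dif_pos hkN]
    rw [Tsite_comm hne.symm, ih hk']

lemma Tprefix_sub {N : ℕ} (k : ℕ) (A B : QubitOp N) :
    Tprefix k (A - B) = Tprefix k A - Tprefix k B := by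
  induction k with
  | zero => rfl
  | succ k ih =>
    by_cases h : k < N <;> simp [Tprefix, h, ih, Tsite_sub]

lemma norm_Tprefix_le {N : ℕ} (k : ℕ) (A : QubitOp N) : ‖Tprefix k A‖ ≤ ‖A‖ := by
  induction k with
  | zero => exact le_refl _
  | succ k ih =>
    by_cases h : k < N
    · simp only [Tprefix, dif_pos h]
      exact (norm_Tsite_le _ _).trans ih
    · simp only [Tprefix, dif_neg h]
      exact ih

lemma norm_delta_Tprefix_le {N : ℕ} (i : Fin N) (O : QubitOp N) :
    ‖deltaSite i (Tprefix (i : ℕ) O)‖ ≤ ‖deltaSite i O‖ := by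
  have : deltaSite i (Tprefix (i : ℕ) O) = Tprefix (i : ℕ) (deltaSite i O) := by
    unfold deltaSite
    rw [Tprefix_sub, Tsite_Tprefix_comm i (i : ℕ) (le_refl _) O]
  rw [this]
  exact norm_Tprefix_le _ _

lemma sum_pair {N : ℕ} (i : Fin N) (F : (Fin N → Fin 2) → Fin 2 → ℂ)
    (hF : ∀ b c a, F (Function.update b i c) a = F b a) :
    ∑ a : Fin 2, ∑ b : Fin N → Fin 2, F b a = 2 * ∑ b : Fin N → Fin 2, F b (b i) := by
  have h2 : ∀ c : Fin 2, c + 1 + 1 = c := by decide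
  have hσ : Function.Involutive (fun b : Fin N → Fin 2 => Function.update b i (b i + 1)) := by
    intro b
    simp only [Function.update_self]
    rw [Function.update_idem, h2, Function.update_eq_self]
  have key : ∑ b : Fin N → Fin 2, F b (b i + 1) = ∑ b : Fin N → Fin 2, F b (b i) := by
    calc ∑ b : Fin N → Fin 2, F b (b i + 1)
        = ∑ b : Fin N → Fin 2, F (Function.Involutive.toPerm _ hσ b)
            ((Function.Involutive.toPerm _ hσ b) i + 1) :=
          (Equiv.sum_comp (Function.Involutive.toPerm _ hσ) (fun b => F b (b i + 1))).symm
      _ = ∑ b : Fin N → Fin 2, F b (b i) := by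
          refine Finset.sum_congr rfl fun b _ => ?_
          show F (Function.update b i (b i + 1)) ((Function.update b i (b i + 1)) i + 1) = F b (b i)
          rw [Function.update_self, h2, hF]
  calc ∑ a : Fin 2, ∑ b : Fin N → Fin 2, F b a
      = ∑ b : Fin N → Fin 2, ∑ a : Fin 2, F b a := Finset.sum_comm
    _ = ∑ b : Fin N → Fin 2, (F b (b i) + F b (b i + 1)) := by
        refine Finset.sum_congr rfl fun b _ => ?_
        rw [Fin.sum_univ_two]
        have e0 : (0 : Fin 2) + 1 = 1 := rfl
        have e1 : (1 : Fin 2) + 1 = 0 := rfl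
        rcases (by decide : ∀ c : Fin 2, c = 0 ∨ c = 1) (b i) with h | h <;> rw [h]
        · rw [e0]
        · rw [e1, add_comm]
    _ = (∑ b : Fin N → Fin 2, F b (b i)) + ∑ b : Fin N → Fin 2, F b (b i + 1) :=
        Finset.sum_add_distrib
    _ = 2 * ∑ b : Fin N → Fin 2, F b (b i) := by rw [key]; ring

def merge {N : ℕ} (k : ℕ) (x b : Fin N → Fin 2) : Fin N → Fin 2 :=
  fun j => if (j : ℕ) < k then b j else x j

lemma merge_zero {N : ℕ} (x b : Fin N → Fin 2) : merge 0 x b = x := by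
  funext j; simp [merge]

lemma merge_update {N : ℕ} {k : ℕ} (hk : k < N) (x b : Fin N → Fin 2) (a : Fin 2) :
    merge k (Function.update x ⟨k, hk⟩ a) b
      = Function.update (merge k x b) ⟨k, hk⟩ a := by
  funext j
  by_cases hj : j = (⟨k, hk⟩ : Fin N)
  · subst hj; simp [merge]
  · have hjk : ¬ ((j : ℕ) < k) → True := fun _ => trivial
    rw [Function.update_of_ne hj]
    simp only [merge, Function.update_of_ne hj]

lemma merge_succ {N : ℕ} {k : ℕ} (hk : k < N) (x b : Fin N → Fin 2) :
    merge (k + 1) x b = Function.update (merge k x b) ⟨k, hk⟩ (b ⟨k, hk⟩) := by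
  funext j
  by_cases hj : j = (⟨k, hk⟩ : Fin N)
  · subst hj; simp [merge]
  · have hjk : (j : ℕ) ≠ k := fun h => hj (Fin.ext h)
    rw [Function.update_of_ne hj]
    simp only [merge]
    have : (j : ℕ) < k + 1 ↔ (j : ℕ) < k := by omega
    rw [if_congr this rfl rfl]

lemma merge_indep {N : ℕ} {k : ℕ} (hk : k < N) (x b : Fin N → Fin 2) (c : Fin 2) :
    merge k x (Function.update b ⟨k, hk⟩ c) = merge k x b := by
  funext j
  by_cases hj : j = (⟨k, hk⟩ : Fin N)
  · subst hj; simp [merge]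
  · simp only [merge, Function.update_of_ne hj]

lemma Tprefix_apply {N : ℕ} (k : ℕ) (hk : k ≤ N) (O : QubitOp N) (x y : Fin N → Fin 2) :
    Tprefix k O x y = if (∀ j : Fin N, (j : ℕ) < k → x j = y j) then
      ((2 : ℂ) ^ N)⁻¹ * ∑ b : Fin N → Fin 2, O (merge k x b) (merge k y b) else 0 := by
  induction k generalizing x y with
  | zero =>
    simp only [Tprefix, Nat.not_lt_zero, false_implies, implies_true, if_true, merge_zero]
    rw [Finset.sum_const, Finset.card_univ]
    have hcard : Fintype.card (Fin N → Fin 2) = 2 ^ N := by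
      simp [Fintype.card_fun]
    rw [hcard]
    simp only [nsmul_eq_mul, Nat.cast_pow, Nat.cast_ofNat]
    rw [← mul_assoc, inv_mul_cancel₀ (pow_ne_zero N two_ne_zero), one_mul]
  | succ k ih =>
    have hkN : k < N := Nat.lt_of_succ_le hk
    have hk' : k ≤ N := le_of_lt hkN
    set i : Fin N := ⟨k, hkN⟩ with hi
    simp only [Tprefix, dif_pos hkN, Tsite, ← hi]
    by_cases h0 : x i = y i
    · rw [if_pos h0]
      have hji : ∀ j : Fin N, (j : ℕ) < k → j ≠ i := by
        intro j hj he
        rw [he] at hj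
        simp only [hi] at hj
        omega
      by_cases hc : ∀ j : Fin N, (j : ℕ) < k → x j = y j
      · have hcond' : ∀ j : Fin N, (j : ℕ) < k + 1 → x j = y j := by
          intro j hj
          by_cases hji' : j = i
          · rw [hji']; exact h0
          · have : (j : ℕ) ≠ k := fun h => hji' (Fin.ext h)
            exact hc j (by omega)
        rw [if_pos hcond']
        have hup : ∀ a : Fin 2, Tprefix k O (Function.update x i a) (Function.update y i a)
            = ((2 : ℂ) ^ N)⁻¹ * ∑ b : Fin N → Fin 2,
                O (Function.update (merge k x b) i a) (Function.update (merge k y b) i a) := by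
          intro a
          rw [ih hk']
          have hcnd : ∀ j : Fin N, (j : ℕ) < k →
              Function.update x i a j = Function.update y i a j := by
            intro j hj
            rw [Function.update_of_ne (hji j hj), Function.update_of_ne (hji j hj)]
            exact hc j hj
          rw [if_pos hcnd]
          congr 1
          refine Finset.sum_congr rfl fun b _ => ?_
          rw [merge_update hkN, merge_update hkN]
        have hmain : ∑ a : Fin 2, ∑ b : Fin N → Fin 2,
            O (Function.update (merge k x b) i a) (Function.update (merge k y b) i a)
            = 2 * ∑ b : Fin N → Fin 2,
                O (Function.update (merge k x b) i (b i)) (Function.update (merge k y b) i (b i)) :=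
          sum_pair i _ (fun b c a => by
            show O (Function.update (merge k x (Function.update b i c)) i a)
                (Function.update (merge k y (Function.update b i c)) i a) = _
            rw [merge_indep hkN, merge_indep hkN])
        simp_rw [hup, merge_succ hkN]
        rw [← Finset.mul_sum, hmain]
        ring
      · have hcnot : ¬ ∀ j : Fin N, (j : ℕ) < k + 1 → x j = y j := by
          intro h
          exact hc fun j hj => h j (by omega)
        rw [if_neg hcnot]
        have hup0 : ∀ a : Fin 2,
            Tprefix k O (Function.update x i a) (Function.update y i a) = 0 := by
          intro a
          rw [ih hk']
          have : ¬ ∀ j : Fin N, (j : ℕ) < k →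
              Function.update x i a j = Function.update y i a j := by
            intro h
            exact hc fun j hj => by
              have := h j hj
              rwa [Function.update_of_ne (hji j hj), Function.update_of_ne (hji j hj)] at this
          rw [if_neg this]
        simp [hup0]
    · rw [if_neg h0]
      have : ¬ ∀ j : Fin N, (j : ℕ) < k + 1 → x j = y j := by
        intro h
        exact h0 (h i (by simp [hi]))
      rw [if_neg this]

lemma Tprefix_top {N : ℕ} (O : QubitOp N) :
    Tprefix N O = (O.trace / (2 ^ N : ℂ)) • (1 : QubitOp N) := by
  ext x y
  rw [Tprefix_apply N (le_refl N)]
  have hmerge : ∀ z b : Fin N → Fin 2, merge N z b = b := by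
    intro z b; funext j; simp [merge, j.isLt]
  simp_rw [hmerge]
  have hcond : (∀ j : Fin N, (j : ℕ) < N → x j = y j) ↔ x = y := by
    constructor
    · intro h; funext j; exact h j j.isLt
    · intro h j _; rw [h]
  rw [if_congr hcond rfl rfl]
  simp only [Matrix.smul_apply, Matrix.one_apply, smul_eq_mul]
  by_cases h : x = y
  · rw [if_pos h, if_pos h, mul_one, Matrix.trace, div_eq_mul_inv, mul_comm]
    congr 1
  · rw [if_neg h, if_neg h, mul_zero]

lemma telescope {N : ℕ} (O : QubitOp N) :
    O - ((O.trace / (2 ^ N : ℂ)) • (1 : QubitOp N))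
      = ∑ i : Fin N, deltaSite i (Tprefix (i : ℕ) O) := by
  have hterm : ∀ i : Fin N, deltaSite i (Tprefix (i : ℕ) O)
      = Tprefix (i : ℕ) O - Tprefix ((i : ℕ) + 1) O := by
    intro i
    have : Tprefix ((i : ℕ) + 1) O = Tsite i (Tprefix (i : ℕ) O) := by
      simp only [Tprefix, dif_pos i.isLt, Fin.eta]
    rw [this]
    rfl
  simp_rw [hterm]
  rw [Fin.sum_univ_eq_sum_range (fun k => Tprefix k O - Tprefix (k + 1) O) N,
    Finset.sum_range_sub' (fun k => Tprefix k O)]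
  rw [Tprefix_top]
  rfl


/-- Telescoping identity
`O - (Tr O / 2^N)·I = Σ_{i=1}^N δ_i(T_{i-1} ∘ ⋯ ∘ T_1(O))` and the consequent bound of the
global deviation from a multiple of the identity by the sum of local oscillations, in the
operator norm. -/
theorem global_deviation_le_sum_local_oscillations {N : ℕ} (O : QubitOp N) :
    (O - ((O.trace / (2 ^ N : ℂ)) • (1 : QubitOp N)) =
        ∑ i : Fin N, deltaSite i (Tprefix (i : ℕ) O)) ∧
      ‖O - ((O.trace / (2 ^ N : ℂ)) • (1 : QubitOp N))‖ ≤
        ∑ i : Fin N, ‖deltaSite i O‖ := by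
  refine ⟨telescope O, ?_⟩
  rw [telescope O]
  exact (norm_sum_le _ _).trans (Finset.sum_le_sum fun i _ => norm_delta_Tprefix_le i O)
end
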